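/- Let A ∈ Matrix (Fin 4) (Fin 4) ℝ be the Hessian of jφ2 at the origin (so A = diag(1,1,−1,−1)), for t ∈ ℝ⁴ let B_t be the Hessian matrix of hφ2_t at the origin (entries (B_t)_{ij} = ∂_i∂_j hφ2_t(0)), and let Ω₀ be the 4×4 matrix with rows (0,1,0,0), (−1,0,0,0), (0,0,0,1), (0,0,−1,0). Then for all t ∈ ℝ⁴ and all c_1, c_2 ∈ ℝ: 390625 · det( Ω₀⁻¹ · (c_1·A + c_2·B_t) ) = f(t,c_1,c_2)², where f(t,c_1,c_2) = 625c_1² + 25c_1c_2(−25 + 50t_1 − 256t_2 − 384t_3 − 192t_4) + 48c_2²( 3t_1² + 320t_2² + 75t_3 + 720t_3² + 75t_4 + 864t_3t_4 + 144t_4² + t_2(50 + 960t_3 + 576t_4) − 50t_1(2t_2 + 3(t_3 + t_4)) ). In particular det( Ω₀⁻¹ (c_1 A + c_2 B_t) ) ≥ 0 for all t, c_1, c_2, so the invariant singular point φ_2(0,0) can never be of hyperbolic-elliptic type. -/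

import Mathlib

open Matrix

/-- `H_t ∘ φ_2` in the chart `φ_2`; coordinates are `p 0 = x`, `p 1 = y`,
`p 2 = u`, `p 3 = v`. -/
noncomputable def hφ2 (t : Fin 4 → ℝ) (p : Fin 4 → ℝ) : ℝ :=
  (1 - 2 * t 0) * ((p 2) ^ 2 + (p 3) ^ 2) / 2 +
  (t 0 / 50) * (p 2 * p 0 - p 3 * p 1) *
    Real.sqrt (2 - (p 0) ^ 2 - (p 1) ^ 2 + 2 * (p 2) ^ 2 + 2 * (p 3) ^ 2) *
    Real.sqrt (8 - (p 0) ^ 2 - (p 1) ^ 2) *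
    Real.sqrt (6 - (p 2) ^ 2 - (p 3) ^ 2) *
    Real.sqrt (6 + (p 0) ^ 2 + (p 1) ^ 2 - 2 * (p 2) ^ 2 - 2 * (p 3) ^ 2) +
  (t 1 / 50) * (2 - (p 0) ^ 2 - (p 1) ^ 2 + 2 * (p 2) ^ 2 + 2 * (p 3) ^ 2) ^ 2 *
    (4 - (p 0) ^ 2 - (p 1) ^ 2 + (p 2) ^ 2 + (p 3) ^ 2) ^ 2 +
  (t 2 / 50) * (2 - (p 0) ^ 2 - (p 1) ^ 2 + 2 * (p 2) ^ 2 + 2 * (p 3) ^ 2) ^ 2 *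
    (6 - (p 2) ^ 2 - (p 3) ^ 2) ^ 2 +
  (t 3 / 100) * (4 - (p 0) ^ 2 - (p 1) ^ 2 + (p 2) ^ 2 + (p 3) ^ 2) ^ 2 *
    (6 - (p 2) ^ 2 - (p 3) ^ 2) ^ 2

/-- The Hessian of `jφ2(x,y,u,v) = (2+x²+y²−u²−v²)/2` at the origin:
`A = diag(1,1,−1,−1)`. -/
noncomputable def Amat : Matrix (Fin 4) (Fin 4) ℝ := Matrix.diagonal ![1, 1, -1, -1]

/-- The Hessian matrix of `hφ2 t` at the origin, `(B_t)_{ij} = ∂_i ∂_j hφ2_t(0)`. -/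
noncomputable def Bmat (t : Fin 4 → ℝ) : Matrix (Fin 4) (Fin 4) ℝ :=
  fun i j => fderiv ℝ (fun p => fderiv ℝ (hφ2 t) p (Pi.single j 1)) 0 (Pi.single i 1)

/-- The matrix of the standard symplectic form `dx∧dy + du∧dv` in the coordinates
`(x,y,u,v)`. -/
noncomputable def Ω₀ : Matrix (Fin 4) (Fin 4) ℝ :=
  !![0, 1, 0, 0; -1, 0, 0, 0; 0, 0, 0, 1; 0, 0, -1, 0]

open scoped ContDiff

namespace DetAux
abbrev E := Fin 4 → ℝ

noncomputable def hess (f : E → ℝ) (i j : Fin 4) : ℝ :=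
  fderiv ℝ (fun p => fderiv ℝ f p (Pi.single j 1)) 0 (Pi.single i 1)

lemma two_ne_top : (2 : WithTop ℕ∞) ≠ ∞ := by decide

lemma diffAt_of_cd2 {f : E → ℝ} {p : E} (h : ContDiffAt ℝ 2 f p) : DifferentiableAt ℝ f p :=
  h.differentiableAt (by norm_num)

lemma ev_diff {f : E → ℝ} (h : ContDiffAt ℝ 2 f 0) :
    ∀ᶠ p in nhds (0 : E), DifferentiableAt ℝ f p := by
  filter_upwards [h.eventually two_ne_top] with p hp using diffAt_of_cd2 hp

lemma fderiv_apply_diffAt {f : E → ℝ} (h : ContDiffAt ℝ 2 f 0) (v : E) :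
    DifferentiableAt ℝ (fun p => fderiv ℝ f p v) 0 :=
  ((h.fderiv_right (m := 1) (by norm_num)).differentiableAt (by norm_num)).clm_apply
    (differentiableAt_const v)

lemma hess_add {f g : E → ℝ} (hf : ContDiffAt ℝ 2 f 0) (hg : ContDiffAt ℝ 2 g 0) (i j : Fin 4) :
    hess (fun p => f p + g p) i j = hess f i j + hess g i j := by
  have hev : (fun p => fderiv ℝ (fun q => f q + g q) p (Pi.single j 1)) =ᶠ[nhds (0:E)]
      fun p => fderiv ℝ f p (Pi.single j 1) + fderiv ℝ g p (Pi.single j 1) := by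
    filter_upwards [ev_diff hf, ev_diff hg] with p hfp hgp
    rw [fderiv_fun_add hfp hgp]; rfl
  unfold hess
  rw [hev.fderiv_eq, fderiv_fun_add (fderiv_apply_diffAt hf _) (fderiv_apply_diffAt hg _)]
  rfl

lemma hess_const (c : ℝ) (i j : Fin 4) : hess (fun _ => c) i j = 0 := by
  unfold hess
  simp

structure Flat (w : E → ℝ) : Prop where
  cd : ContDiffAt ℝ 2 w 0
  v0 : w 0 = 0
  d0 : fderiv ℝ w 0 = 0

lemma Flat.add {w s : E → ℝ} (hw : Flat w) (hs : Flat s) : Flat (fun p => w p + s p) := by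
  refine ⟨hw.cd.add hs.cd, by simp [hw.v0, hs.v0], ?_⟩
  rw [fderiv_fun_add (diffAt_of_cd2 hw.cd) (diffAt_of_cd2 hs.cd), hw.d0, hs.d0, add_zero]

lemma Flat.const_mul {w : E → ℝ} (hw : Flat w) (c : ℝ) : Flat (fun p => c * w p) := by
  refine ⟨hw.cd.const_smul c, by simp [hw.v0], ?_⟩
  rw [fderiv_const_mul (diffAt_of_cd2 hw.cd), hw.d0, smul_zero]

lemma Flat.mul {w s : E → ℝ} (hw : Flat w) (hs : ContDiffAt ℝ 2 s 0) :
    Flat (fun p => w p * s p) := by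
  refine ⟨hw.cd.mul hs, by simp [hw.v0], ?_⟩
  rw [fderiv_fun_mul (diffAt_of_cd2 hw.cd) (diffAt_of_cd2 hs), hw.v0, hw.d0]
  simp

lemma flat_coord (k l : Fin 4) : Flat (fun p => p k * p l) := by
  have hk : HasFDerivAt (fun p : E => p k) (ContinuousLinearMap.proj k : E →L[ℝ] ℝ) 0 :=
    (ContinuousLinearMap.proj k : E →L[ℝ] ℝ).hasFDerivAt
  have hl : HasFDerivAt (fun p : E => p l) (ContinuousLinearMap.proj l : E →L[ℝ] ℝ) 0 :=
    (ContinuousLinearMap.proj l : E →L[ℝ] ℝ).hasFDerivAt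
  refine ⟨?_, by simp, ?_⟩
  · exact (((ContinuousLinearMap.proj k : E →L[ℝ] ℝ)).contDiff.mul
      ((ContinuousLinearMap.proj l : E →L[ℝ] ℝ)).contDiff).contDiffAt
  · have := (hk.fun_mul hl).fderiv
    rw [this]
    simp

lemma hess_flat_mul {w s : E → ℝ} (hw : Flat w) (hs : ContDiffAt ℝ 2 s 0) (hs0 : s 0 = 0)
    (i j : Fin 4) : hess (fun p => w p * s p) i j = 0 := by
  have hev : (fun p => fderiv ℝ (fun q => w q * s q) p (Pi.single j 1)) =ᶠ[nhds (0:E)]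
      fun p => w p * fderiv ℝ s p (Pi.single j 1) + s p * fderiv ℝ w p (Pi.single j 1) := by
    filter_upwards [ev_diff hw.cd, ev_diff hs] with p hwp hsp
    rw [fderiv_fun_mul hwp hsp]
    simp
  unfold hess
  rw [hev.fderiv_eq]
  have d1 : DifferentiableAt ℝ (fun p => w p * fderiv ℝ s p (Pi.single j 1)) 0 :=
    (diffAt_of_cd2 hw.cd).mul (fderiv_apply_diffAt hs _)
  have d2 : DifferentiableAt ℝ (fun p => s p * fderiv ℝ w p (Pi.single j 1)) 0 :=
    (diffAt_of_cd2 hs).mul (fderiv_apply_diffAt hw.cd _)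
  rw [fderiv_fun_add d1 d2]
  rw [ContinuousLinearMap.add_apply]
  rw [fderiv_fun_mul (diffAt_of_cd2 hw.cd) (fderiv_apply_diffAt hs _),
    fderiv_fun_mul (diffAt_of_cd2 hs) (fderiv_apply_diffAt hw.cd _)]
  simp [hw.v0, hw.d0, hs0]

lemma hess_mono (c : ℝ) (k l i j : Fin 4) : hess (fun p => c * (p k * p l)) i j =
    c * ((Pi.single i (1:ℝ) : E) k * (Pi.single j (1:ℝ) : E) l
       + (Pi.single i (1:ℝ) : E) l * (Pi.single j (1:ℝ) : E) k) := by
  have h1 : ∀ p : E, fderiv ℝ (fun q : E => c * (q k * q l)) p (Pi.single j 1) =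
      c * (p k * (Pi.single j (1:ℝ) : E) l + p l * (Pi.single j (1:ℝ) : E) k) := by
    intro p
    have hk : HasFDerivAt (fun q : E => q k) (ContinuousLinearMap.proj k : E →L[ℝ] ℝ) p :=
      (ContinuousLinearMap.proj k : E →L[ℝ] ℝ).hasFDerivAt
    have hl : HasFDerivAt (fun q : E => q l) (ContinuousLinearMap.proj l : E →L[ℝ] ℝ) p :=
      (ContinuousLinearMap.proj l : E →L[ℝ] ℝ).hasFDerivAt
    rw [((hk.fun_mul hl).const_mul c).fderiv]
    simp [mul_add, mul_comm]
  unfold hess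
  rw [show (fun p => fderiv ℝ (fun q : E => c * (q k * q l)) p (Pi.single j 1)) =
      fun p : E => c * (p k * (Pi.single j (1:ℝ) : E) l + p l * (Pi.single j (1:ℝ) : E) k)
    from funext h1]
  have hk : HasFDerivAt (fun q : E => q k) (ContinuousLinearMap.proj k : E →L[ℝ] ℝ) (0:E) :=
    (ContinuousLinearMap.proj k : E →L[ℝ] ℝ).hasFDerivAt
  have hl : HasFDerivAt (fun q : E => q l) (ContinuousLinearMap.proj l : E →L[ℝ] ℝ) (0:E) :=
    (ContinuousLinearMap.proj l : E →L[ℝ] ℝ).hasFDerivAt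
  rw [(((hk.mul_const ((Pi.single j (1:ℝ) : E) l)).fun_add
      (hl.mul_const ((Pi.single j (1:ℝ) : E) k))).const_mul c).fderiv]
  simp [mul_comm]
  ring

section Concrete
variable (t : Fin 4 → ℝ)

def Sf (p : E) : ℝ := p 0 * p 0 + p 1 * p 1
def Tf (p : E) : ℝ := p 2 * p 2 + p 3 * p 3
def q1f (p : E) : ℝ := p 2 * p 0 - p 3 * p 1
def kf (p : E) : ℝ := -6 * Sf p + 10 * Tf p +
  (Sf p * Sf p + -3 * (Sf p * Tf p) + 2 * (Tf p * Tf p))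
def mf (p : E) : ℝ := -6 * Sf p + 10 * Tf p + (Sf p * Tf p + -2 * (Tf p * Tf p))
def nf (p : E) : ℝ := -6 * Sf p + 2 * Tf p + (Sf p * Tf p + -1 * (Tf p * Tf p))
noncomputable def gfun (p : E) : ℝ :=
  Real.sqrt (2 - (p 0) ^ 2 - (p 1) ^ 2 + 2 * (p 2) ^ 2 + 2 * (p 3) ^ 2) *
  Real.sqrt (8 - (p 0) ^ 2 - (p 1) ^ 2) *
  Real.sqrt (6 - (p 2) ^ 2 - (p 3) ^ 2) *
  Real.sqrt (6 + (p 0) ^ 2 + (p 1) ^ 2 - 2 * (p 2) ^ 2 - 2 * (p 3) ^ 2)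

lemma flat_S : Flat Sf := by unfold Sf; exact (flat_coord 0 0).add (flat_coord 1 1)
lemma flat_T : Flat Tf := by unfold Tf; exact (flat_coord 2 2).add (flat_coord 3 3)
lemma flat_q1 : Flat q1f := by
  unfold q1f
  have := (flat_coord 2 0).add ((flat_coord 3 1).const_mul (-1))
  have h : (fun p : E => p 2 * p 0 + -1 * (p 3 * p 1)) = fun p : E => p 2 * p 0 - p 3 * p 1 := by
    funext p; ring
  rwa [h] at this
lemma flat_k : Flat kf := by
  unfold kf
  exact ((flat_S.const_mul (-6)).add (flat_T.const_mul 10)).add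
    (((flat_S.mul flat_S.cd).add ((flat_S.mul flat_T.cd).const_mul (-3))).add
      ((flat_T.mul flat_T.cd).const_mul 2))
lemma flat_m : Flat mf := by
  unfold mf
  exact ((flat_S.const_mul (-6)).add (flat_T.const_mul 10)).add
    ((flat_S.mul flat_T.cd).add ((flat_T.mul flat_T.cd).const_mul (-2)))
lemma flat_n : Flat nf := by
  unfold nf
  exact ((flat_S.const_mul (-6)).add (flat_T.const_mul 2)).add
    ((flat_S.mul flat_T.cd).add ((flat_T.mul flat_T.cd).const_mul (-1)))

lemma cd_gfun : ContDiffAt ℝ 2 gfun 0 := by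
  unfold gfun
  have h1 : ContDiffAt ℝ 2 (fun p : E => 2 - (p 0) ^ 2 - (p 1) ^ 2 + 2 * (p 2) ^ 2 + 2 * (p 3) ^ 2) 0 := by
    fun_prop
  have h2 : ContDiffAt ℝ 2 (fun p : E => 8 - (p 0) ^ 2 - (p 1) ^ 2) 0 := by fun_prop
  have h3 : ContDiffAt ℝ 2 (fun p : E => 6 - (p 2) ^ 2 - (p 3) ^ 2) 0 := by fun_prop
  have h4 : ContDiffAt ℝ 2 (fun p : E => 6 + (p 0) ^ 2 + (p 1) ^ 2 - 2 * (p 2) ^ 2 - 2 * (p 3) ^ 2) 0 := by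
    fun_prop
  exact (((h1.sqrt (by norm_num)).mul (h2.sqrt (by norm_num))).mul
    (h3.sqrt (by norm_num))).mul (h4.sqrt (by norm_num))

lemma gfun_zero : gfun 0 = 24 := by
  unfold gfun
  have e : ∀ i, (0 : E) i = (0:ℝ) := fun _ => rfl
  simp only [e]
  rw [show (2 - (0:ℝ)^2 - (0:ℝ)^2 + 2*(0:ℝ)^2 + 2*(0:ℝ)^2) = 2 by norm_num,
    show (8 - (0:ℝ)^2 - (0:ℝ)^2) = 8 by norm_num,
    show (6 - (0:ℝ)^2 - (0:ℝ)^2) = 6 by norm_num,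
    show (6 + (0:ℝ)^2 + (0:ℝ)^2 - 2*(0:ℝ)^2 - 2*(0:ℝ)^2) = 6 by norm_num]
  have h28 : Real.sqrt 2 * Real.sqrt 8 = 4 := by
    rw [← Real.sqrt_mul (by norm_num)]
    rw [show (2:ℝ)*8 = 16 by norm_num]
    rw [show (16:ℝ) = 4^2 by norm_num, Real.sqrt_sq (by norm_num)]
  have h66 : Real.sqrt 6 * Real.sqrt 6 = 6 := Real.mul_self_sqrt (by norm_num)
  rw [h28, mul_assoc, h66]
  norm_num

end Concrete

section Chain
variable (t : Fin 4 → ℝ)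

noncomputable def Cc : ℝ := 64 * t 1 / 50 + 144 * t 2 / 50 + 576 * t 3 / 100
noncomputable def ASc : ℝ := (-96 * t 1 - 144 * t 2 - 144 * t 3) / 50
noncomputable def ATc : ℝ := (1 - 2 * t 0) / 2 + (160 * t 1 + 240 * t 2 + 48 * t 3) / 50
noncomputable def cSTc : ℝ := -48 * t 1 / 50 + 24 * t 2 / 50 + 48 * t 3 / 100
noncomputable def cTTc : ℝ := 32 * t 1 / 50 - 48 * t 2 / 50 - 48 * t 3 / 100

noncomputable def F0 : E → ℝ := fun _ => Cc t
noncomputable def F1 : E → ℝ := fun p => F0 t p + ASc t * (p 0 * p 0)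
noncomputable def F2 : E → ℝ := fun p => F1 t p + ASc t * (p 1 * p 1)
noncomputable def F3 : E → ℝ := fun p => F2 t p + ATc t * (p 2 * p 2)
noncomputable def F4 : E → ℝ := fun p => F3 t p + ATc t * (p 3 * p 3)
noncomputable def F5 : E → ℝ := fun p => F4 t p + 12 * t 0 / 25 * (p 2 * p 0)
noncomputable def F6 : E → ℝ := fun p => F5 t p + -(12 * t 0 / 25) * (p 3 * p 1)
noncomputable def F7 : E → ℝ := fun p => F6 t p + t 0 / 50 * q1f p * (gfun p - 24)
noncomputable def F8 : E → ℝ := fun p => F7 t p + 16 * t 1 / 50 * Sf p * Sf p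
noncomputable def F9 : E → ℝ := fun p => F8 t p + cSTc t * Sf p * Tf p
noncomputable def F10 : E → ℝ := fun p => F9 t p + cTTc t * Tf p * Tf p
noncomputable def F11 : E → ℝ := fun p => F10 t p + t 1 / 50 * kf p * kf p
noncomputable def F12 : E → ℝ := fun p => F11 t p + t 2 / 50 * mf p * mf p
noncomputable def F13 : E → ℝ := fun p => F12 t p + t 3 / 100 * nf p * nf p

lemma hφ2_eq : hφ2 t = F13 t := by
  funext p
  show hφ2 t p = F13 t p
  unfold hφ2 F13 F12 F11 F10 F9 F8 F7 F6 F5 F4 F3 F2 F1 F0 kf mf nf q1f gfun Sf Tf ASc ATc cSTc cTTc Cc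
  ring

lemma hess_F13 (i j : Fin 4) : hess (F13 t) i j =
    ASc t * ((Pi.single i (1:ℝ) : E) 0 * (Pi.single j (1:ℝ) : E) 0
           + (Pi.single i (1:ℝ) : E) 0 * (Pi.single j (1:ℝ) : E) 0)
  + ASc t * ((Pi.single i (1:ℝ) : E) 1 * (Pi.single j (1:ℝ) : E) 1
           + (Pi.single i (1:ℝ) : E) 1 * (Pi.single j (1:ℝ) : E) 1)
  + ATc t * ((Pi.single i (1:ℝ) : E) 2 * (Pi.single j (1:ℝ) : E) 2
           + (Pi.single i (1:ℝ) : E) 2 * (Pi.single j (1:ℝ) : E) 2)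
  + ATc t * ((Pi.single i (1:ℝ) : E) 3 * (Pi.single j (1:ℝ) : E) 3
           + (Pi.single i (1:ℝ) : E) 3 * (Pi.single j (1:ℝ) : E) 3)
  + 12 * t 0 / 25 * ((Pi.single i (1:ℝ) : E) 2 * (Pi.single j (1:ℝ) : E) 0
           + (Pi.single i (1:ℝ) : E) 0 * (Pi.single j (1:ℝ) : E) 2)
  + -(12 * t 0 / 25) * ((Pi.single i (1:ℝ) : E) 3 * (Pi.single j (1:ℝ) : E) 1
           + (Pi.single i (1:ℝ) : E) 1 * (Pi.single j (1:ℝ) : E) 3) := by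
  have cm : ∀ (c : ℝ) (k l : Fin 4), ContDiffAt ℝ 2 (fun p : E => c * (p k * p l)) 0 :=
    fun c k l => ((flat_coord k l).const_mul c).cd
  have c0 : ContDiffAt ℝ 2 (F0 t) 0 := contDiffAt_const
  have c1 : ContDiffAt ℝ 2 (F1 t) 0 := c0.add (cm _ 0 0)
  have c2 : ContDiffAt ℝ 2 (F2 t) 0 := c1.add (cm _ 1 1)
  have c3 : ContDiffAt ℝ 2 (F3 t) 0 := c2.add (cm _ 2 2)
  have c4 : ContDiffAt ℝ 2 (F4 t) 0 := c3.add (cm _ 3 3)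
  have c5 : ContDiffAt ℝ 2 (F5 t) 0 := c4.add (cm _ 2 0)
  have c6 : ContDiffAt ℝ 2 (F6 t) 0 := c5.add (cm _ 3 1)
  have w7 : Flat (fun p : E => t 0 / 50 * q1f p) := flat_q1.const_mul _
  have s7 : ContDiffAt ℝ 2 (fun p : E => gfun p - 24) 0 := cd_gfun.sub contDiffAt_const
  have c7 : ContDiffAt ℝ 2 (F7 t) 0 := c6.add (w7.mul s7).cd
  have w8 : Flat (fun p : E => 16 * t 1 / 50 * Sf p) := flat_S.const_mul _
  have c8 : ContDiffAt ℝ 2 (F8 t) 0 := c7.add (w8.mul flat_S.cd).cd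
  have w9 : Flat (fun p : E => cSTc t * Sf p) := flat_S.const_mul _
  have c9 : ContDiffAt ℝ 2 (F9 t) 0 := c8.add (w9.mul flat_T.cd).cd
  have w10 : Flat (fun p : E => cTTc t * Tf p) := flat_T.const_mul _
  have c10 : ContDiffAt ℝ 2 (F10 t) 0 := c9.add (w10.mul flat_T.cd).cd
  have w11 : Flat (fun p : E => t 1 / 50 * kf p) := flat_k.const_mul _
  have c11 : ContDiffAt ℝ 2 (F11 t) 0 := c10.add (w11.mul flat_k.cd).cd
  have w12 : Flat (fun p : E => t 2 / 50 * mf p) := flat_m.const_mul _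
  have c12 : ContDiffAt ℝ 2 (F12 t) 0 := c11.add (w12.mul flat_m.cd).cd
  have w13 : Flat (fun p : E => t 3 / 100 * nf p) := flat_n.const_mul _
  have e13 : hess (F13 t) i j = hess (F12 t) i j := by
    calc hess (F13 t) i j
        = hess (F12 t) i j + hess (fun p : E => t 3 / 100 * nf p * nf p) i j :=
          hess_add c12 (w13.mul flat_n.cd).cd i j
      _ = hess (F12 t) i j := by
          rw [hess_flat_mul w13 flat_n.cd flat_n.v0 i j, add_zero]
  have e12 : hess (F12 t) i j = hess (F11 t) i j := by
    calc hess (F12 t) i j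
        = hess (F11 t) i j + hess (fun p : E => t 2 / 50 * mf p * mf p) i j :=
          hess_add c11 (w12.mul flat_m.cd).cd i j
      _ = hess (F11 t) i j := by
          rw [hess_flat_mul w12 flat_m.cd flat_m.v0 i j, add_zero]
  have e11 : hess (F11 t) i j = hess (F10 t) i j := by
    calc hess (F11 t) i j
        = hess (F10 t) i j + hess (fun p : E => t 1 / 50 * kf p * kf p) i j :=
          hess_add c10 (w11.mul flat_k.cd).cd i j
      _ = hess (F10 t) i j := by
          rw [hess_flat_mul w11 flat_k.cd flat_k.v0 i j, add_zero]
  have e10 : hess (F10 t) i j = hess (F9 t) i j := by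
    calc hess (F10 t) i j
        = hess (F9 t) i j + hess (fun p : E => cTTc t * Tf p * Tf p) i j :=
          hess_add c9 (w10.mul flat_T.cd).cd i j
      _ = hess (F9 t) i j := by
          rw [hess_flat_mul w10 flat_T.cd flat_T.v0 i j, add_zero]
  have e9 : hess (F9 t) i j = hess (F8 t) i j := by
    calc hess (F9 t) i j
        = hess (F8 t) i j + hess (fun p : E => cSTc t * Sf p * Tf p) i j :=
          hess_add c8 (w9.mul flat_T.cd).cd i j
      _ = hess (F8 t) i j := by
          rw [hess_flat_mul w9 flat_T.cd flat_T.v0 i j, add_zero]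
  have e8 : hess (F8 t) i j = hess (F7 t) i j := by
    calc hess (F8 t) i j
        = hess (F7 t) i j + hess (fun p : E => 16 * t 1 / 50 * Sf p * Sf p) i j :=
          hess_add c7 (w8.mul flat_S.cd).cd i j
      _ = hess (F7 t) i j := by
          rw [hess_flat_mul w8 flat_S.cd flat_S.v0 i j, add_zero]
  have s70 : (fun p : E => gfun p - 24) 0 = 0 := by simp [gfun_zero]
  have e7 : hess (F7 t) i j = hess (F6 t) i j := by
    calc hess (F7 t) i j
        = hess (F6 t) i j + hess (fun p : E => t 0 / 50 * q1f p * (gfun p - 24)) i j :=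
          hess_add c6 (w7.mul s7).cd i j
      _ = hess (F6 t) i j := by
          rw [hess_flat_mul w7 s7 s70 i j, add_zero]
  have g6 : hess (F6 t) i j = hess (F5 t) i j
      + -(12 * t 0 / 25) * ((Pi.single i (1:ℝ) : E) 3 * (Pi.single j (1:ℝ) : E) 1
           + (Pi.single i (1:ℝ) : E) 1 * (Pi.single j (1:ℝ) : E) 3) := by
    calc hess (F6 t) i j
        = hess (F5 t) i j + hess (fun p : E => -(12 * t 0 / 25) * (p 3 * p 1)) i j :=
          hess_add c5 (cm _ 3 1) i j
      _ = _ := by rw [hess_mono]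
  have g5 : hess (F5 t) i j = hess (F4 t) i j
      + 12 * t 0 / 25 * ((Pi.single i (1:ℝ) : E) 2 * (Pi.single j (1:ℝ) : E) 0
           + (Pi.single i (1:ℝ) : E) 0 * (Pi.single j (1:ℝ) : E) 2) := by
    calc hess (F5 t) i j
        = hess (F4 t) i j + hess (fun p : E => 12 * t 0 / 25 * (p 2 * p 0)) i j :=
          hess_add c4 (cm _ 2 0) i j
      _ = _ := by rw [hess_mono]
  have g4 : hess (F4 t) i j = hess (F3 t) i j
      + ATc t * ((Pi.single i (1:ℝ) : E) 3 * (Pi.single j (1:ℝ) : E) 3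
           + (Pi.single i (1:ℝ) : E) 3 * (Pi.single j (1:ℝ) : E) 3) := by
    calc hess (F4 t) i j
        = hess (F3 t) i j + hess (fun p : E => ATc t * (p 3 * p 3)) i j :=
          hess_add c3 (cm _ 3 3) i j
      _ = _ := by rw [hess_mono]
  have g3 : hess (F3 t) i j = hess (F2 t) i j
      + ATc t * ((Pi.single i (1:ℝ) : E) 2 * (Pi.single j (1:ℝ) : E) 2
           + (Pi.single i (1:ℝ) : E) 2 * (Pi.single j (1:ℝ) : E) 2) := by
    calc hess (F3 t) i j
        = hess (F2 t) i j + hess (fun p : E => ATc t * (p 2 * p 2)) i j :=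
          hess_add c2 (cm _ 2 2) i j
      _ = _ := by rw [hess_mono]
  have g2 : hess (F2 t) i j = hess (F1 t) i j
      + ASc t * ((Pi.single i (1:ℝ) : E) 1 * (Pi.single j (1:ℝ) : E) 1
           + (Pi.single i (1:ℝ) : E) 1 * (Pi.single j (1:ℝ) : E) 1) := by
    calc hess (F2 t) i j
        = hess (F1 t) i j + hess (fun p : E => ASc t * (p 1 * p 1)) i j :=
          hess_add c1 (cm _ 1 1) i j
      _ = _ := by rw [hess_mono]
  have g1 : hess (F1 t) i j = hess (F0 t) i j
      + ASc t * ((Pi.single i (1:ℝ) : E) 0 * (Pi.single j (1:ℝ) : E) 0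
           + (Pi.single i (1:ℝ) : E) 0 * (Pi.single j (1:ℝ) : E) 0) := by
    calc hess (F1 t) i j
        = hess (F0 t) i j + hess (fun p : E => ASc t * (p 0 * p 0)) i j :=
          hess_add c0 (cm _ 0 0) i j
      _ = _ := by rw [hess_mono]
  have g0 : hess (F0 t) i j = 0 := hess_const (Cc t) i j
  rw [e13, e12, e11, e10, e9, e8, e7, g6, g5, g4, g3, g2, g1, g0]
  ring

end Chain

lemma bmat_hess (t : Fin 4 → ℝ) (i j : Fin 4) : Bmat t i j = hess (F13 t) i j := by
  show hess (hφ2 t) i j = _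
  rw [hφ2_eq]

lemma omega_det : Ω₀.det = 1 := by
  have h : Fin.succAbove (1 : Fin 4) 2 = 3 := by decide
  rw [Matrix.det_succ_row_zero]
  simp [Ω₀, Fin.sum_univ_succ, Matrix.det_fin_three, h]

lemma matrix_eq (t : Fin 4 → ℝ) (c₁ c₂ : ℝ) : c₁ • Amat + c₂ • Bmat t =
    !![c₁ + c₂ * (2 * ASc t), 0, c₂ * (12 * t 0 / 25), 0;
       0, c₁ + c₂ * (2 * ASc t), 0, -(c₂ * (12 * t 0 / 25));
       c₂ * (12 * t 0 / 25), 0, -c₁ + c₂ * (2 * ATc t), 0;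
       0, -(c₂ * (12 * t 0 / 25)), 0, -c₁ + c₂ * (2 * ATc t)] := by
  ext i j
  rw [Matrix.add_apply, Matrix.smul_apply, Matrix.smul_apply, bmat_hess t i j, hess_F13,
    smul_eq_mul, smul_eq_mul]
  fin_cases i <;> fin_cases j <;>
    simp [Amat, Matrix.diagonal, Pi.single_apply]
  all_goals first | (exact Or.inl (by ring)) | ring

lemma det_special (a b e : ℝ) :
    Matrix.det !![a, 0, b, 0; 0, a, 0, -b; b, 0, e, 0; 0, -b, 0, e] = (a * e - b * b) ^ 2 := by
  have h : Fin.succAbove (2 : Fin 4) 2 = 3 := by decide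
  rw [Matrix.det_succ_row_zero]
  simp [Fin.sum_univ_succ, Matrix.det_fin_three, h]
  ring

end DetAux

open DetAux in
set_option maxHeartbeats 1000000 in
/-- `390625 · det(Ω₀⁻¹ (c₁A + c₂B_t))` is the perfect square `f(t,c₁,c₂)²`; in
particular the determinant is always nonnegative, so the invariant singular point
`φ_2(0,0)` can never be of hyperbolic-elliptic type. -/
theorem det_at_invariant_point_is_square :
    ∀ (t : Fin 4 → ℝ) (c₁ c₂ : ℝ),
      390625 * (Ω₀⁻¹ * (c₁ • Amat + c₂ • Bmat t)).det =
        (625 * c₁ ^ 2 +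
          25 * c₁ * c₂ * (-25 + 50 * t 0 - 256 * t 1 - 384 * t 2 - 192 * t 3) +
          48 * c₂ ^ 2 *
            (3 * (t 0) ^ 2 + 320 * (t 1) ^ 2 + 75 * t 2 + 720 * (t 2) ^ 2 +
              75 * t 3 + 864 * t 2 * t 3 + 144 * (t 3) ^ 2 +
              t 1 * (50 + 960 * t 2 + 576 * t 3) -
              50 * t 0 * (2 * t 1 + 3 * (t 2 + t 3)))) ^ 2 ∧
      0 ≤ (Ω₀⁻¹ * (c₁ • Amat + c₂ • Bmat t)).det := by
  intro t c₁ c₂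
  have hdet : (Ω₀⁻¹ * (c₁ • Amat + c₂ • Bmat t)).det = (c₁ • Amat + c₂ • Bmat t).det := by
    rw [Matrix.det_mul, Matrix.det_nonsing_inv, omega_det, Ring.inverse_one, one_mul]
  have key : 390625 * (Ω₀⁻¹ * (c₁ • Amat + c₂ • Bmat t)).det =
      (625 * c₁ ^ 2 +
        25 * c₁ * c₂ * (-25 + 50 * t 0 - 256 * t 1 - 384 * t 2 - 192 * t 3) +
        48 * c₂ ^ 2 *
          (3 * (t 0) ^ 2 + 320 * (t 1) ^ 2 + 75 * t 2 + 720 * (t 2) ^ 2 +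
            75 * t 3 + 864 * t 2 * t 3 + 144 * (t 3) ^ 2 +
            t 1 * (50 + 960 * t 2 + 576 * t 3) -
            50 * t 0 * (2 * t 1 + 3 * (t 2 + t 3)))) ^ 2 := by
    rw [hdet, matrix_eq t c₁ c₂, det_special]
    simp only [ASc, ATc]
    ring
  refine ⟨key, ?_⟩
  linarith [key, sq_nonneg (625 * c₁ ^ 2 +
        25 * c₁ * c₂ * (-25 + 50 * t 0 - 256 * t 1 - 384 * t 2 - 192 * t 3) +
        48 * c₂ ^ 2 *
          (3 * (t 0) ^ 2 + 320 * (t 1) ^ 2 + 75 * t 2 + 720 * (t 2) ^ 2 +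
            75 * t 3 + 864 * t 2 * t 3 + 144 * (t 3) ^ 2 +
            t 1 * (50 + 960 * t 2 + 576 * t 3) -
            50 * t 0 * (2 * t 1 + 3 * (t 2 + t 3))))]
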